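/- Let N = k^t q with k ≥ 2, t ≥ 1, gcd(q,k)=1, and define f on {0,...,N-1} by f(A) = (kA + A_{t-1}) mod N, where A_{t-1} is the coefficient of k^{t-1} in the base-k expansion of A. For any x, the t-fold iterate satisfies f^t(x) ≡ k^t x + A' (mod N), where A' = Σ_{i=0}^{t-1} k^i x_i is the number formed by the t lowest base-k digits of x. -/

import Mathlib

theorem iterate_t_formula (N k t q : ℕ) (hk : 2 ≤ k) (ht : 1 ≤ t) (hq : 1 ≤ q)
    (hco : Nat.Coprime q k) (hN : N = k ^ t * q)
    (f : ℕ → ℕ) (hf : ∀ A, f A = (k * A + A / k ^ (t - 1) % k) % N) :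
    ∀ x < N, f^[t] x = (k ^ t * x + x % k ^ t) % N := by
  intro x hx
  have hk0 : 0 < k := by omega
  have hkt : (0:ℕ) < k ^ t := pow_pos hk0 t
  have hNdvd : k ^ t ∣ N := hN ▸ Dvd.intro q rfl
  have key : ∀ j, j ≤ t → f^[j] x = (k ^ j * x + x / k ^ (t - j) % k ^ j) % N := by
    intro j hj
    induction j with
    | zero =>
      simp [Nat.mod_one, Nat.mod_eq_of_lt hx]
    | succ j ih =>
      have hjt : j < t := hj
      have ihv := ih (le_of_lt hjt)
      set m := t - j with hmdef
      have hm1 : 1 ≤ m := by omega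
      have htm : t = j + m := by omega
      have htm1 : t - 1 = j + (m - 1) := by omega
      have htm2 : t - (j + 1) = m - 1 := by omega
      set c := x / k ^ m % k ^ j with hcdef
      have hc : c < k ^ j := Nat.mod_lt _ (pow_pos hk0 j)
      set A := (k ^ j * x + c) % N with hAdef
      -- the digit extracted from A
      have hpowt : k ^ t = k ^ j * k ^ m := by rw [htm, pow_add]
      have hpowt1 : k ^ (t - 1) = k ^ j * k ^ (m - 1) := by rw [htm1, pow_add]
      have hpowm : k ^ m = k ^ (m - 1) * k := by
        conv_lhs => rw [show m = (m - 1) + 1 by omega, pow_succ]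
      have hdig : A / k ^ (t - 1) % k = x / k ^ (m - 1) % k := by
        have h1 : A / k ^ (t - 1) % k = A % k ^ t / k ^ (t - 1) := by
          rw [show k ^ t = k ^ (t - 1) * k by
            conv_lhs => rw [show t = (t - 1) + 1 by omega, pow_succ]]
          rw [Nat.mod_mul_right_div_self]
        have h2 : A % k ^ t = (k ^ j * x + c) % k ^ t :=
          Nat.mod_mod_of_dvd _ hNdvd
        have hsplit : k ^ j * x + c
            = k ^ j * (x % k ^ m) + c + (k ^ j * k ^ m) * (x / k ^ m) := by
          conv_lhs => rw [← Nat.div_add_mod x (k ^ m)]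
          ring
        have h3 : (k ^ j * x + c) % k ^ t = k ^ j * (x % k ^ m) + c := by
          rw [hpowt, hsplit, Nat.add_mul_mod_self_left]
          refine Nat.mod_eq_of_lt ?_
          have : x % k ^ m + 1 ≤ k ^ m := Nat.mod_lt _ (pow_pos hk0 m)
          calc k ^ j * (x % k ^ m) + c < k ^ j * (x % k ^ m) + k ^ j := by omega
            _ = k ^ j * (x % k ^ m + 1) := by ring
            _ ≤ k ^ j * k ^ m := Nat.mul_le_mul_left _ this
        have h4 : (k ^ j * (x % k ^ m) + c) / k ^ (t - 1) = (x % k ^ m) / k ^ (m - 1) := by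
          rw [hpowt1, ← Nat.div_div_eq_div_mul,
            Nat.mul_add_div (pow_pos hk0 j),
            Nat.div_eq_of_lt hc, Nat.add_zero]
        have h5 : (x % k ^ m) / k ^ (m - 1) = x / k ^ (m - 1) % k := by
          rw [hpowm, Nat.mod_mul_right_div_self]
        rw [h1, h2, h3, h4, h5]
      -- now compute f A
      rw [Function.iterate_succ_apply', ihv, hf, hdig]
      set d := x / k ^ (m - 1) % k with hddef
      have hmod : (k * A + d) % N = (k * (k ^ j * x + c) + d) % N := by
        have : A ≡ k ^ j * x + c [MOD N] := Nat.mod_modEq _ _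
        exact ((this.mul_left k).add_right d)
      rw [hmod]
      congr 1
      have hy : k * c + d = x / k ^ (t - (j + 1)) % k ^ (j + 1) := by
        have hxd : x / k ^ m = x / k ^ (m - 1) / k := by
          rw [hpowm, Nat.div_div_eq_div_mul]
        rw [htm2, hcdef, hddef, hxd, pow_succ, mul_comm (k ^ j) k, Nat.mod_mul]
        omega
      rw [← hy]
      ring
  have := key t le_rfl
  rw [this, Nat.sub_self, pow_zero, Nat.div_one]
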